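/- The support function σ(x,q) := sup{ ⟨q,p⟩ : p ∈ C_x } is jointly continuous on Ω̄ × ℝⁿ, and for every x ∈ Ω̄ the function q ↦ σ(x,q) is convex. -/

import Mathlib

open Set Metric Topology

noncomputable section

abbrev Euc (n : ℕ) := EuclideanSpace ℝ (Fin n)

/-- The support function `σ(x,q) := sup{⟨q,p⟩ : p ∈ C_x}` is jointly
continuous on `Ω̄ × ℝⁿ`, and for every `x ∈ Ω̄` the map `q ↦ σ(x,q)` is convex. -/
theorem support_function_continuous_and_convex
    {n : ℕ} (hn : 1 ≤ n)
    (Ω : Set (Euc n)) (hΩne : Ω.Nonempty)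
    (C : Set (Euc n × Euc n)) (hCsub : C ⊆ Ω ×ˢ (univ : Set (Euc n)))
    (hCclosed : IsClosed C)
    (hconv : ∀ x ∈ Ω, Convex ℝ {p : Euc n | (x, p) ∈ C})
    (hint : ∀ xp ∈ C, ∀ δ : ℝ, 0 < δ →
      ∃ p' : Euc n, dist xp.2 p' ≤ δ ∧ C ∈ 𝓝[Ω ×ˢ (univ : Set (Euc n))] ((xp.1 : Euc n), p'))
    (σl σu : ℝ) (hσl : 0 < σl) (hσlu : σl ≤ σu)
    (hball : ∀ x ∈ Ω, ball (0 : Euc n) σl ⊆ {p : Euc n | (x, p) ∈ C} ∧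
      {p : Euc n | (x, p) ∈ C} ⊆ ball (0 : Euc n) σu) :
    ContinuousOn
      (fun xq : Euc n × Euc n =>
        sSup ((fun p : Euc n => (inner ℝ xq.2 p : ℝ)) '' {p : Euc n | (xq.1, p) ∈ C}))
      (Ω ×ˢ (univ : Set (Euc n))) ∧
    ∀ x ∈ Ω, ConvexOn ℝ (univ : Set (Euc n))
      (fun q : Euc n => sSup ((fun p : Euc n => (inner ℝ q p : ℝ)) '' {p : Euc n | (x, p) ∈ C})) := by
  classical
  have hσu : 0 < σu := lt_of_lt_of_le hσl hσlu
  set F : Euc n × Euc n → ℝ := fun xq : Euc n × Euc n =>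
    sSup ((fun p : Euc n => (inner ℝ xq.2 p : ℝ)) '' {p : Euc n | (xq.1, p) ∈ C}) with hF
  -- basic facts about the slices
  have h0 : ∀ x ∈ Ω, ((x, (0 : Euc n)) : Euc n × Euc n) ∈ C := fun x hx =>
    (hball x hx).1 (mem_ball_self hσl)
  have hne : ∀ x ∈ Ω, {p : Euc n | (x, p) ∈ C}.Nonempty := fun x hx => ⟨0, h0 x hx⟩
  have hclosed : ∀ x : Euc n, IsClosed {p : Euc n | (x, p) ∈ C} := fun x =>
    hCclosed.preimage (Continuous.prodMk_right x)
  have hcpt : ∀ x ∈ Ω, IsCompact {p : Euc n | (x, p) ∈ C} := fun x hx =>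
    Metric.isCompact_of_isClosed_isBounded (hclosed x)
      ((isBounded_ball).subset (hball x hx).2)
  have hcont : ∀ q : Euc n, Continuous fun p : Euc n => (inner ℝ q p : ℝ) :=
    fun q => Continuous.inner continuous_const continuous_id
  have himg : ∀ x ∈ Ω, ∀ q : Euc n,
      IsCompact ((fun p : Euc n => (inner ℝ q p : ℝ)) '' {p : Euc n | (x, p) ∈ C}) :=
    fun x hx q => (hcpt x hx).image (hcont q)
  have himgne : ∀ x ∈ Ω, ∀ q : Euc n,
      ((fun p : Euc n => (inner ℝ q p : ℝ)) '' {p : Euc n | (x, p) ∈ C}).Nonempty :=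
    fun x hx q => (hne x hx).image _
  have hnorm : ∀ x ∈ Ω, ∀ p : Euc n, (x, p) ∈ C → ‖p‖ ≤ σu := by
    intro x hx p hp
    have h := (hball x hx).2 hp
    rw [mem_ball, dist_zero_right] at h
    exact h.le
  have hle : ∀ x ∈ Ω, ∀ q p : Euc n, (x, p) ∈ C → (inner ℝ q p : ℝ) ≤ F (x, q) := by
    intro x hx q p hp
    exact le_csSup ((himg x hx q).bddAbove) (mem_image_of_mem _ hp)
  have hmem : ∀ x ∈ Ω, ∀ q : Euc n, ∃ p : Euc n, (x, p) ∈ C ∧ (inner ℝ q p : ℝ) = F (x, q) := by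
    intro x hx q
    have := (himg x hx q).sSup_mem (himgne x hx q)
    obtain ⟨p, hp, hpe⟩ := this
    exact ⟨p, hp, hpe⟩
  -- Lipschitz in q
  have hlip : ∀ x ∈ Ω, ∀ q q' : Euc n, F (x, q) ≤ F (x, q') + σu * ‖q - q'‖ := by
    intro x hx q q'
    apply csSup_le (himgne x hx q)
    rintro y ⟨p, hp, rfl⟩
    have h1 : (inner ℝ q p : ℝ) = inner ℝ q' p + inner ℝ (q - q') p := by
      rw [inner_sub_left]; ring
    have h2 : (inner ℝ (q - q') p : ℝ) ≤ ‖q - q'‖ * σu :=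
      le_trans (real_inner_le_norm _ _)
        (mul_le_mul_of_nonneg_left (hnorm x hx p hp) (norm_nonneg _))
    have h3 := hle x hx q' p hp
    simp only [h1]
    nlinarith [h2, h3]
  constructor
  · -- continuity
    rintro ⟨x₀, q₀⟩ hz₀
    have hx₀ : x₀ ∈ Ω := hz₀.1
    show Filter.Tendsto F (𝓝[Ω ×ˢ (univ : Set (Euc n))] (x₀, q₀)) (𝓝 (F (x₀, q₀)))
    rw [Metric.tendsto_nhds]
    intro ε hε
    -- ===== lower bound =====
    obtain ⟨p₀, hp₀C, hp₀eq⟩ := hmem x₀ hx₀ q₀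
    set δ : ℝ := min 1 (ε / (2 * (‖q₀‖ + 1))) with hδdef
    have hq₀1 : (0:ℝ) < ‖q₀‖ + 1 := by positivity
    have hδpos : 0 < δ := lt_min one_pos (by positivity)
    obtain ⟨p', hp'near, hp'nhd⟩ := hint (x₀, p₀) hp₀C δ hδpos
    rw [Metric.mem_nhdsWithin_iff] at hp'nhd
    obtain ⟨r₂, hr₂pos, hr₂sub⟩ := hp'nhd
    have hp'mem : ∀ x ∈ Ω, dist x x₀ < r₂ → (x, p') ∈ C := by
      intro x hx hxr
      apply hr₂sub
      refine ⟨?_, hx, mem_univ _⟩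
      have : dist ((x, p') : Euc n × Euc n) (x₀, p') = dist x x₀ := by
        rw [Prod.dist_eq, dist_self]
        exact max_eq_left dist_nonneg
      rw [mem_ball, this]
      exact hxr
    have hp'norm : ‖p'‖ ≤ σu + 1 := by
      have h1 : ‖p'‖ ≤ ‖p₀‖ + dist p₀ p' := by
        have : ‖p'‖ - ‖p₀‖ ≤ ‖p' - p₀‖ := norm_sub_norm_le _ _
        rw [← dist_eq_norm, dist_comm] at this
        linarith
      have h2 : δ ≤ 1 := min_le_left _ _
      have h3 := hnorm x₀ hx₀ p₀ hp₀C
      linarith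
    have hlow : ∀ x ∈ Ω, ∀ q : Euc n, dist x x₀ < r₂ → dist q q₀ < ε / (2 * (σu + 1)) →
        F (x₀, q₀) - ε < F (x, q) := by
      intro x hx q hxr hqr
      have h1 : (inner ℝ q p' : ℝ) ≤ F (x, q) := hle x hx q p' (hp'mem x hx hxr)
      have e1 : (inner ℝ q₀ p₀ : ℝ) - inner ℝ q p' = inner ℝ q₀ (p₀ - p') + inner ℝ (q₀ - q) p' := by
        rw [inner_sub_right, inner_sub_left]; ring
      have e2 : (inner ℝ q₀ (p₀ - p') : ℝ) ≤ ε / 2 := by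
        have := real_inner_le_norm q₀ (p₀ - p')
        have hnp : ‖p₀ - p'‖ ≤ δ := by rw [← dist_eq_norm]; exact hp'near
        have hδ2 : δ ≤ ε / (2 * (‖q₀‖ + 1)) := min_le_right _ _
        have hq0 : (0:ℝ) ≤ ‖q₀‖ := norm_nonneg _
        have : (inner ℝ q₀ (p₀ - p') : ℝ) ≤ ‖q₀‖ * δ := by
          calc (inner ℝ q₀ (p₀ - p') : ℝ) ≤ ‖q₀‖ * ‖p₀ - p'‖ := real_inner_le_norm _ _
            _ ≤ ‖q₀‖ * δ := mul_le_mul_of_nonneg_left hnp hq0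
        have key : ‖q₀‖ * δ ≤ ε / 2 := by
          have h1 : ‖q₀‖ * δ ≤ (‖q₀‖ + 1) * (ε / (2 * (‖q₀‖ + 1))) := by
            apply mul_le_mul (by linarith) hδ2 hδpos.le (by linarith)
          have h2 : (‖q₀‖ + 1) * (ε / (2 * (‖q₀‖ + 1))) = ε / 2 := by
            field_simp
          linarith
        linarith
      have e3 : (inner ℝ (q₀ - q) p' : ℝ) < ε / 2 := by
        have hσ1 : (0:ℝ) < σu + 1 := by linarith
        have h1 : ‖q₀ - q‖ < ε / (2 * (σu + 1)) := by
          rw [← dist_eq_norm, dist_comm]; exact hqr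
        calc (inner ℝ (q₀ - q) p' : ℝ) ≤ ‖q₀ - q‖ * ‖p'‖ := real_inner_le_norm _ _
          _ ≤ ‖q₀ - q‖ * (σu + 1) := mul_le_mul_of_nonneg_left hp'norm (norm_nonneg _)
          _ < (ε / (2 * (σu + 1))) * (σu + 1) := by
              apply mul_lt_mul_of_pos_right h1 hσ1
          _ = ε / 2 := by field_simp
      have : F (x₀, q₀) - (inner ℝ q p' : ℝ) < ε := by
        rw [← hp₀eq]
        linarith [e1, e2, e3]
      linarith
    -- ===== upper bound =====
    obtain ⟨r₁, hr₁pos, hr₁⟩ : ∃ r₁ > 0, ∀ x ∈ Ω, dist x x₀ < r₁ → ∀ p : Euc n,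
        (x, p) ∈ C → (inner ℝ q₀ p : ℝ) < F (x₀, q₀) + ε / 2 := by
      set K : Set (Euc n × Euc n) :=
        C ∩ {z : Euc n × Euc n | dist z.1 x₀ ≤ 1} ∩
          {z : Euc n × Euc n | F (x₀, q₀) + ε / 2 ≤ inner ℝ q₀ z.2} with hK
      have hKclosed : IsClosed K := by
        apply IsClosed.inter
        · exact hCclosed.inter (isClosed_le (continuous_fst.dist continuous_const)
            continuous_const)
        · exact isClosed_le continuous_const
            (Continuous.inner continuous_const continuous_snd)
      have hKbdd : Bornology.IsBounded K := by
        apply Bornology.IsBounded.subset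
          ((isBounded_closedBall (x := x₀) (r := 1)).prod (isBounded_ball (x := (0 : Euc n)) (r := σu)))
        rintro ⟨x, p⟩ ⟨⟨hC, hd⟩, _⟩
        have hxΩ : x ∈ Ω := (hCsub hC).1
        exact ⟨by simpa [mem_closedBall] using hd, (hball x hxΩ).2 hC⟩
      have hKcpt : IsCompact K := Metric.isCompact_of_isClosed_isBounded hKclosed hKbdd
      by_cases hKne : K.Nonempty
      · obtain ⟨z, hzK, hzmin⟩ := hKcpt.exists_isMinOn hKne
          ((continuous_fst.dist continuous_const).continuousOn)
        have hd : 0 < dist z.1 x₀ := by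
          rcases eq_or_lt_of_le (dist_nonneg (x := z.1) (y := x₀)) with h | h
          · exfalso
            have hz1 : z.1 = x₀ := by
              rw [← dist_eq_zero]; exact h.symm
            have hzC : z ∈ C := hzK.1.1
            have hzineq : F (x₀, q₀) + ε / 2 ≤ inner ℝ q₀ z.2 := hzK.2
            have : (inner ℝ q₀ z.2 : ℝ) ≤ F (x₀, q₀) := by
              apply hle x₀ hx₀ q₀ z.2
              rw [← hz1]
              exact hzC
            linarith
          · exact h
        refine ⟨min (dist z.1 x₀) 1, lt_min hd one_pos, ?_⟩
        intro x hx hxr p hp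
        by_contra hcon
        push_neg at hcon
        have hxK : ((x, p) : Euc n × Euc n) ∈ K :=
          ⟨⟨hp, le_of_lt (lt_of_lt_of_le hxr (min_le_right _ _))⟩, hcon⟩
        have := hzmin hxK
        simp only [Set.mem_setOf_eq] at this
        have h2 : dist x x₀ < dist z.1 x₀ := lt_of_lt_of_le hxr (min_le_left _ _)
        exact absurd this (not_le.mpr h2)
      · refine ⟨1, one_pos, ?_⟩
        intro x hx hxr p hp
        by_contra hcon
        push_neg at hcon
        exact hKne ⟨(x, p), ⟨hp, hxr.le⟩, hcon⟩
    have hup : ∀ x ∈ Ω, ∀ q : Euc n, dist x x₀ < r₁ → dist q q₀ < ε / (2 * σu) →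
        F (x, q) < F (x₀, q₀) + ε := by
      intro x hx q hxr hqr
      have h1 := hlip x hx q q₀
      have h2 : F (x, q₀) ≤ F (x₀, q₀) + ε / 2 := by
        apply csSup_le (himgne x hx q₀)
        rintro y ⟨p, hp, rfl⟩
        exact (hr₁ x hx hxr p hp).le
      have h3 : σu * ‖q - q₀‖ < ε / 2 := by
        have : ‖q - q₀‖ < ε / (2 * σu) := by rw [← dist_eq_norm]; exact hqr
        calc σu * ‖q - q₀‖ < σu * (ε / (2 * σu)) := by
              exact mul_lt_mul_of_pos_left this hσu
          _ = ε / 2 := by field_simp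
      linarith
    -- combine
    rw [Filter.eventually_iff, Metric.mem_nhdsWithin_iff]
    refine ⟨min (min r₁ r₂) (min (ε / (2 * σu)) (ε / (2 * (σu + 1)))), ?_, ?_⟩
    · have h1 : (0:ℝ) < ε / (2 * σu) := by positivity
      have h2 : (0:ℝ) < ε / (2 * (σu + 1)) := by positivity
      exact lt_min (lt_min hr₁pos hr₂pos) (lt_min h1 h2)
    · rintro ⟨x, q⟩ ⟨hzball, hzS⟩
      have hx : x ∈ Ω := hzS.1
      rw [mem_ball, Prod.dist_eq] at hzball
      have hxd : dist x x₀ < min (min r₁ r₂) (min (ε / (2 * σu)) (ε / (2 * (σu + 1)))) :=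
        lt_of_le_of_lt (le_max_left _ _) hzball
      have hqd : dist q q₀ < min (min r₁ r₂) (min (ε / (2 * σu)) (ε / (2 * (σu + 1)))) :=
        lt_of_le_of_lt (le_max_right _ _) hzball
      have hx1 : dist x x₀ < r₁ := lt_of_lt_of_le hxd (le_trans (min_le_left _ _) (min_le_left _ _))
      have hx2 : dist x x₀ < r₂ := lt_of_lt_of_le hxd (le_trans (min_le_left _ _) (min_le_right _ _))
      have hq1 : dist q q₀ < ε / (2 * σu) :=
        lt_of_lt_of_le hqd (le_trans (min_le_right _ _) (min_le_left _ _))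
      have hq2 : dist q q₀ < ε / (2 * (σu + 1)) :=
        lt_of_lt_of_le hqd (le_trans (min_le_right _ _) (min_le_right _ _))
      have hupper := hup x hx q hx1 hq1
      have hlower := hlow x hx q hx2 hq2
      rw [Set.mem_setOf_eq, Real.dist_eq, abs_sub_lt_iff]
      constructor <;> linarith
  · -- convexity
    intro x hx
    refine ⟨convex_univ, ?_⟩
    intro q₁ _ q₂ _ a b ha hb hab
    apply csSup_le (himgne x hx _)
    rintro y ⟨p, hp, rfl⟩
    have h1 : (inner ℝ (a • q₁ + b • q₂) p : ℝ) = a * inner ℝ q₁ p + b * inner ℝ q₂ p := by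
      rw [inner_add_left, real_inner_smul_left, real_inner_smul_left]
    have h2 : (inner ℝ q₁ p : ℝ) ≤ F (x, q₁) := hle x hx q₁ p hp
    have h3 : (inner ℝ q₂ p : ℝ) ≤ F (x, q₂) := hle x hx q₂ p hp
    simp only [smul_eq_mul]
    have hFeq1 : F (x, q₁) =
        sSup ((fun p : Euc n => (inner ℝ q₁ p : ℝ)) '' {p : Euc n | (x, p) ∈ C}) := by
      rw [hF]
    have hFeq2 : F (x, q₂) =
        sSup ((fun p : Euc n => (inner ℝ q₂ p : ℝ)) '' {p : Euc n | (x, p) ∈ C}) := by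
      rw [hF]
    rw [← hFeq1, ← hFeq2, h1]
    exact add_le_add (mul_le_mul_of_nonneg_left h2 ha) (mul_le_mul_of_nonneg_left h3 hb)
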